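/- If (L,·) is a σ-generalized right Bol loop, then (xy·σ(x))^{-1} = σ(x)^{-1}y^{-1}·x^{-1} for all x,y ∈ L. -/
import Mathlib


/-- A loop: a quasigroup with two-sided identity. -/
class MyLoop (L : Type*) extends Mul L, One L where
  one_mul : ∀ a : L, 1 * a = a
  mul_one : ∀ a : L, a * 1 = a
  ldiv : L → L → L
  rdiv : L → L → L
  mul_ldiv : ∀ a b : L, a * ldiv a b = b
  ldiv_mul : ∀ a b : L, ldiv a (a * b) = b
  rdiv_mul : ∀ a b : L, rdiv a b * b = a
  mul_rdiv : ∀ a b : L, rdiv (a * b) b = a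

namespace MyLoop

variable {L : Type*} [MyLoop L]

/-- right inverse: `x * rho x = 1` -/
def rho (x : L) : L := ldiv x 1

/-- left inverse: `lam x * x = 1` -/
def lam (x : L) : L := rdiv 1 x

/-- right translation `R_a : y ↦ y * a`, as a bijection -/
def Rt (a : L) : Equiv.Perm L :=
  ⟨fun y => y * a, fun y => rdiv y a, fun y => mul_rdiv y a, fun y => rdiv_mul y a⟩

/-- left translation `L_a : y ↦ a * y`, as a bijection -/
def Lt (a : L) : Equiv.Perm L :=
  ⟨fun y => a * y, fun y => ldiv a y, fun y => ldiv_mul a y, fun y => mul_ldiv a y⟩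

/-- σ-generalized (right) Bol loop identity -/
def GBol (σ : L → L) : Prop := ∀ x y z : L, ((x * y) * z) * σ y = x * ((y * z) * σ y)

/-- σ-generalized left Bol loop identity -/
def LBol (σ : L → L) : Prop := ∀ x y z : L, σ y * (z * (y * x)) = (σ y * (z * y)) * x

/-- σ-M-loop identity -/
def MLoopP (σ : L → L) : Prop := ∀ x y z : L, (x * y) * (z * σ x) = (x * (y * z)) * σ x

/-- right inverse property -/
def RIP (L : Type*) [MyLoop L] : Prop := ∀ x y : L, (y * x) * rho x = y

/-- left inverse property -/
def LIP (L : Type*) [MyLoop L] : Prop := ∀ x y : L, lam x * (x * y) = y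

/-- right nucleus -/
def Nrho (L : Type*) [MyLoop L] : Set L := {a | ∀ y z : L, (z * y) * a = z * (y * a)}

/-- middle nucleus -/
def Nmu (L : Type*) [MyLoop L] : Set L := {a | ∀ y z : L, (z * a) * y = z * (a * y)}

/-- multiplication of the A-holomorph `H = A × L`, `(α,x)∘(β,y) = (αβ, xβ · y)` -/
def hmul (A : Subgroup (MulAut L)) (p q : ↥A × L) : ↥A × L :=
  (p.1 * q.1, (q.1 : MulAut L) p.2 * q.2)

/-- the right inverse of an element of the holomorph -/
def hrho (A : Subgroup (MulAut L)) (p : ↥A × L) : ↥A × L :=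
  (p.1⁻¹, rho ((p.1⁻¹ : MulAut L) p.2))

/-- the holomorph is a σ'-generalized Bol loop, where `σ'(α,x) = (α, σ x)` -/
def HGBol (A : Subgroup (MulAut L)) (σ : L → L) : Prop :=
  ∀ p q r : ↥A × L,
    hmul A (hmul A (hmul A p q) r) (q.1, σ q.2) =
      hmul A p (hmul A (hmul A q r) (q.1, σ q.2))

end MyLoop

open MyLoop

/-- in a σ-generalized right Bol loop,
`(xy·σ(x))⁻¹ = σ(x)⁻¹ y⁻¹ · x⁻¹` (inverses are two-sided there, given by `rho`). -/
theorem gbol_inv_identity {L : Type*} [MyLoop L] (σ : L → L) (h : GBol σ) :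
    ∀ x y : L, rho ((x * y) * σ x) = (rho (σ x) * rho y) * rho x := by
    -- RIP: (w * y) * rho y = w
    have rip : ∀ y w : L, (w * y) * rho y = w := by
      intro y w
      have h1 : ((w * y) * rho y) * σ y = w * ((y * rho y) * σ y) := h w y (rho y)
      rw [show y * rho y = 1 from mul_ldiv y 1, MyLoop.one_mul] at h1
      have := congrArg (fun t => rdiv t (σ y)) h1
      simpa [mul_rdiv] using this
    -- rho = lam (two-sided inverses)
    have rl : ∀ x : L, rho x * x = 1 := by
      intro x
      have h1 : (lam x * x) * rho x = lam x := rip x (lam x)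
      rw [show lam x * x = 1 from rdiv_mul 1 x, MyLoop.one_mul] at h1
      rw [h1]; exact rdiv_mul 1 x
    have rr : ∀ x : L, rho (rho x) = x := by
      intro x
      have := ldiv_mul (rho x) x
      rw [rl x] at this
      exact this
    have rip' : ∀ x w : L, (w * rho x) * x = w := by
      intro x w
      have := rip (rho x) w
      rwa [rr x] at this
    intro x y
    set A := (rho (σ x) * rho y) * rho x with hA
    have key : ((A * x) * y) * σ x = A * ((x * y) * σ x) := h A x y
    rw [hA, rip' x, rip' y] at key
    rw [rl (σ x)] at key
    have h2 : A * ((x * y) * σ x) = 1 := key.symm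
    have h3 := ldiv_mul A ((x * y) * σ x)
    rw [h2] at h3
    -- h3 : ldiv A 1 = (x*y)*σ x, i.e. rho A = ...
    have h4 : rho A = (x * y) * σ x := h3
    calc rho ((x * y) * σ x) = rho (rho A) := by rw [h4]
      _ = A := rr A
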